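/- For all nonnegative integers k, ℓ, m: Σ_{k₁=0}^{k} Σ_{ℓ₁=0}^{ℓ} Σ_{m₁=0}^{m} [(ℓ₁+1)(2k₁+ℓ₁+m₁)! / ((k₁+ℓ₁+1)! m₁! k₁!)] * [(ℓ-ℓ₁+1)(2(k-k₁)+(ℓ-ℓ₁)+(m-m₁))! / ((k-k₁+ℓ-ℓ₁+1)! (m-m₁)! (k-k₁)!)] = (2k+ℓ+m+1)! (ℓ+2)(ℓ+1) / (m! k! (k+ℓ+2)!). -/

import Mathlib

open Finset Nat

noncomputable def Aq (k p : ℕ) : ℚ := (p+1) * (2*k+p)! / ((k)! * (k+p+1)!)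

lemma factq (n : ℕ) : ((n)! : ℚ) ≠ 0 := by exact_mod_cast (Nat.factorial_pos n).ne'

lemma hockey (b m : ℕ) : ∑ j ∈ range (m+1), (b+j).choose j = (b+m+1).choose m := by
  induction m with
  | zero => simp
  | succ m ih =>
      rw [sum_range_succ, ih]
      exact (Nat.choose_succ_succ (b+m+1) m).symm

lemma vander (a b m : ℕ) :
    ∑ j ∈ range (m+1), (a+j).choose j * (b+(m-j)).choose (m-j) = (a+b+m+1).choose m := by
  induction a generalizing m with
  | zero =>
      have h1 : ∑ j ∈ range (m+1), (0+j).choose j * (b+(m-j)).choose (m-j)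
          = ∑ j ∈ range (m+1), (b+(m-j)).choose (m-j) := by simp
      have h2 := sum_range_reflect (fun j => (b+(m-j)).choose (m-j)) (m+1)
      simp only [Nat.add_sub_cancel] at h2
      rw [h1, ← h2]
      have h3 : ∀ j ∈ range (m+1), (b+(m-(m-j))).choose (m-(m-j)) = (b+j).choose j := by
        intro j hj
        have : m - (m - j) = j := by
          have := Finset.mem_range.mp hj; omega
        rw [this]
      rw [Finset.sum_congr rfl h3, hockey]
      congr 1
      omega
  | succ a ih =>
      induction m with
      | zero => simp
      | succ m ihm =>
          rw [sum_range_succ' _ (m+1)]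
          have expand : ∑ j ∈ range (m+1), (a+1+(j+1)).choose (j+1) * (b+(m+1-(j+1))).choose (m+1-(j+1))
              = (∑ j ∈ range (m+1), (a+(j+1)).choose (j+1) * (b+(m-j)).choose (m-j))
              + ∑ j ∈ range (m+1), (a+1+j).choose j * (b+(m-j)).choose (m-j) := by
            rw [← Finset.sum_add_distrib]
            refine Finset.sum_congr rfl fun j hj => ?_
            have step : (a+1+(j+1)).choose (j+1) = (a+(j+1)).choose (j+1) + (a+1+j).choose j := by
              have h : a+1+(j+1) = (a+(j+1))+1 := by ring
              rw [h, Nat.choose_succ_succ (a+(j+1)) j]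
              have h2 : a+(j+1) = a+1+j := by ring
              rw [h2, Nat.add_comm]
            have h3 : m + 1 - (j+1) = m - j := by omega
            rw [step, h3, add_mul]
          rw [expand, ihm]
          simp only [Nat.choose_zero_right, one_mul, Nat.sub_zero, Nat.add_zero]
          have hfull := ih (m+1)
          rw [sum_range_succ' _ (m+1)] at hfull
          have h4 : ∑ j ∈ range (m+1), (a+(j+1)).choose (j+1) * (b+(m+1-(j+1))).choose (m+1-(j+1))
              = ∑ j ∈ range (m+1), (a+(j+1)).choose (j+1) * (b+(m-j)).choose (m-j) := by
            refine Finset.sum_congr rfl fun j hj => ?_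
            have h3 : m + 1 - (j+1) = m - j := by omega
            rw [h3]
          rw [h4] at hfull
          simp only [Nat.choose_zero_right, one_mul, Nat.sub_zero, Nat.add_zero] at hfull
          have pascal : (a+b+m+2+1).choose (m+1) = (a+b+m+2).choose m + (a+b+m+2).choose (m+1) :=
            Nat.choose_succ_succ (a+b+m+2) m
          have e1 : a+b+(m+1)+1 = a+b+m+2 := by ring
          rw [e1] at hfull
          have e2 : a+1+b+(m+1)+1 = a+b+m+2+1 := by ring
          have e3 : a+1+b+m+1 = a+b+m+2 := by ring
          rw [e2, e3, pascal]
          omega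

lemma A_cat (n : ℕ) : (catalan n : ℚ) = Aq n 0 := by
  have h1 : (n + 1) * catalan n = n.centralBinom := succ_mul_catalan_eq_centralBinom n
  have h2 : n.centralBinom * ((n)! * (n)!) = (2*n)! := by
    rw [Nat.centralBinom]
    have := Nat.choose_mul_factorial_mul_factorial (show n ≤ 2*n by omega)
    rw [show 2*n - n = n by omega] at this
    rw [← Nat.mul_assoc]
    exact this
  have h3 : ((n+1) * catalan n * ((n)! * (n)!) : ℕ) = (2*n)! := by rw [h1, h2]
  have h4 : (((n:ℚ)+1) * catalan n * ((n)! * (n)!)) = ((2*n)! : ℚ) := by exact_mod_cast h3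
  unfold Aq
  have h5 : ((n+0+1)! : ℚ) = (n+1) * (n)! := by
    push_cast [Nat.factorial_succ]; ring
  rw [show (n+0+1) = n+1 from rfl]
  field_simp [Nat.factorial_succ] at *
  rw [h5]; simp only [Nat.cast_zero, zero_add, add_zero]; linarith [h4]

lemma A_tri (k q : ℕ) : Aq (k+1) (q+1) = Aq (k+1) q + Aq k (q+2) := by
  unfold Aq
  have e1 : 2*(k+1)+(q+1) = (2*k+q+2)+1 := by ring
  have e2 : 2*(k+1)+q = 2*k+q+2 := by ring
  have e3 : (k+1)+(q+1)+1 = (k+q+2)+1 := by ring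
  have e4 : (k+1)+q+1 = k+q+2 := by ring
  have e5 : k+(q+2)+1 = (k+q+2)+1 := by ring
  rw [e1, e2, e3, e4, e5, Nat.factorial_succ (2*k+q+2), Nat.factorial_succ (k+q+2),
    Nat.factorial_succ k]
  push_cast
  have nz1 := factq (2*k+q+2)
  have nz2 := factq (k+q+2)
  have nz3 := factq k
  field_simp
  ring

noncomputable def gcat : PowerSeries ℚ := PowerSeries.mk fun n => (catalan n : ℚ)

lemma gcat_eq : gcat = 1 + PowerSeries.X * gcat^2 := by
  ext n
  cases n with
  | zero =>
      simp [gcat, PowerSeries.coeff_zero_eq_constantCoeff, map_add, map_mul]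
  | succ n =>
      rw [map_add, PowerSeries.coeff_succ_X_mul]
      simp only [gcat, PowerSeries.coeff_mk, PowerSeries.coeff_one, Nat.succ_ne_zero, if_false,
        zero_add, sq]
      rw [PowerSeries.coeff_mul, Finset.Nat.sum_antidiagonal_eq_sum_range_succ_mk]
      simp only [PowerSeries.coeff_mk]
      rw [catalan_succ' n, Finset.Nat.sum_antidiagonal_eq_sum_range_succ_mk]
      push_cast
      rfl

lemma A_zero_q (q : ℕ) : Aq 0 q = 1 := by
  unfold Aq
  rw [show 2*0+q = q by ring, Nat.factorial_succ q, Nat.factorial_zero]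
  have hq : ((q)! : ℚ) ≠ 0 := factq q
  push_cast
  field_simp

lemma coeff_g_pow (k q : ℕ) : PowerSeries.coeff (R := ℚ) k (gcat^(q+1)) = Aq k q := by
  induction k generalizing q with
  | zero =>
      rw [PowerSeries.coeff_zero_eq_constantCoeff, map_pow]
      have : PowerSeries.constantCoeff (R := ℚ) gcat = 1 := by simp [gcat]
      rw [this, one_pow, A_zero_q]
  | succ k ih =>
      induction q with
      | zero =>
          rw [pow_one]
          have : PowerSeries.coeff (R := ℚ) (k+1) gcat = ((catalan (k+1)) : ℚ) := by simp [gcat]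
          rw [this, A_cat]
      | succ q ihq =>
          have expand : gcat^(q+1+1) = gcat^(q+1) + PowerSeries.X * gcat^(q+2+1) := by
            calc gcat^(q+2) = gcat^(q+1) * gcat := by ring
              _ = gcat^(q+1) * (1 + PowerSeries.X * gcat^2) := by rw [← gcat_eq]
              _ = gcat^(q+1) + PowerSeries.X * gcat^(q+3) := by ring
          rw [expand, map_add, PowerSeries.coeff_succ_X_mul, ihq, ih (q+2), A_tri]

lemma A_conv (p q k : ℕ) :
    ∑ i ∈ range (k+1), Aq i p * Aq (k-i) q = Aq k (p+q+1) := by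
  have h : PowerSeries.coeff (R := ℚ) k (gcat^(p+1) * gcat^(q+1)) = Aq k (p+q+1) := by
    rw [← pow_add]
    have : p+1+(q+1) = (p+q+1)+1 := by ring
    rw [this, coeff_g_pow]
  rw [PowerSeries.coeff_mul, Finset.Nat.sum_antidiagonal_eq_sum_range_succ_mk] at h
  simpa only [coeff_g_pow] using h

lemma term_eq (a b c : ℕ) :
    ((b + 1 : ℚ) * (2*a+b+c)!) / ((a+b+1)! * c ! * a !)
      = Aq a b * ((2*a+b+c).choose c : ℚ) := by
  have h := Nat.choose_mul_factorial_mul_factorial (show c ≤ 2*a+b+c by omega)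
  rw [show 2*a+b+c-c = 2*a+b by omega] at h
  have hq : (((2*a+b+c).choose c : ℚ) * c ! * (2*a+b)!) = ((2*a+b+c)! : ℚ) := by
    exact_mod_cast h
  unfold Aq
  rw [← hq]
  have n1 := factq (a+b+1)
  have n2 := factq c
  have n3 := factq a
  have n4 := factq (2*a+b)
  field_simp

/-- Coefficientwise form of `∂F/∂y = F²` for the type `A` F-triangle generating series,
expressed with factorials. -/
theorem typeA_coefficient_identity (k ℓ m : ℕ) :
    ∑ k₁ ∈ range (k + 1), ∑ ℓ₁ ∈ range (ℓ + 1), ∑ m₁ ∈ range (m + 1),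
        (((ℓ₁ + 1 : ℚ) * (2 * k₁ + ℓ₁ + m₁)!) / ((k₁ + ℓ₁ + 1)! * m₁ ! * k₁ !)) *
          (((ℓ - ℓ₁ + 1 : ℚ) * (2 * (k - k₁) + (ℓ - ℓ₁) + (m - m₁))!) /
            (((k - k₁) + (ℓ - ℓ₁) + 1)! * (m - m₁)! * (k - k₁)!)) =
      ((2 * k + ℓ + m + 1)! * (ℓ + 2) * (ℓ + 1) : ℚ) / (m ! * k ! * (k + ℓ + 2)!) := by
  have step1 : ∀ k₁ ∈ range (k+1), ∀ ℓ₁ ∈ range (ℓ+1),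
      ∑ m₁ ∈ range (m + 1),
        (((ℓ₁ + 1 : ℚ) * (2 * k₁ + ℓ₁ + m₁)!) / ((k₁ + ℓ₁ + 1)! * m₁ ! * k₁ !)) *
          (((ℓ - ℓ₁ + 1 : ℚ) * (2 * (k - k₁) + (ℓ - ℓ₁) + (m - m₁))!) /
            (((k - k₁) + (ℓ - ℓ₁) + 1)! * (m - m₁)! * (k - k₁)!))
      = (Aq k₁ ℓ₁ * Aq (k-k₁) (ℓ-ℓ₁)) * ((2*k+ℓ+m+1).choose m : ℚ) := by
    intro k₁ hk₁ ℓ₁ hℓ₁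
    have hk₁' : k₁ ≤ k := Nat.lt_succ_iff.mp (Finset.mem_range.mp hk₁)
    have hℓ₁' : ℓ₁ ≤ ℓ := Nat.lt_succ_iff.mp (Finset.mem_range.mp hℓ₁)
    have hsub : ((ℓ:ℚ) - (ℓ₁:ℚ) + 1) = (((ℓ - ℓ₁ : ℕ) : ℚ) + 1) := by
      rw [Nat.cast_sub hℓ₁']
    have tcong : ∀ m₁ ∈ range (m+1),
        (((ℓ₁ + 1 : ℚ) * (2 * k₁ + ℓ₁ + m₁)!) / ((k₁ + ℓ₁ + 1)! * m₁ ! * k₁ !)) *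
          (((ℓ - ℓ₁ + 1 : ℚ) * (2 * (k - k₁) + (ℓ - ℓ₁) + (m - m₁))!) /
            (((k - k₁) + (ℓ - ℓ₁) + 1)! * (m - m₁)! * (k - k₁)!))
        = (Aq k₁ ℓ₁ * Aq (k-k₁) (ℓ-ℓ₁)) *
            (((2*k₁+ℓ₁+m₁).choose m₁ : ℚ) *
              ((2*(k-k₁)+(ℓ-ℓ₁)+(m-m₁)).choose (m-m₁) : ℚ)) := by
      intro m₁ _
      rw [hsub, term_eq k₁ ℓ₁ m₁, term_eq (k-k₁) (ℓ-ℓ₁) (m-m₁)]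
      ring
    rw [Finset.sum_congr rfl tcong, ← Finset.mul_sum]
    congr 1
    have hv := vander (2*k₁+ℓ₁) (2*(k-k₁)+(ℓ-ℓ₁)) m
    have hab : 2*k₁+ℓ₁ + (2*(k-k₁)+(ℓ-ℓ₁)) = 2*k+ℓ := by omega
    rw [hab] at hv
    rw [← hv]
    push_cast
    rfl
  rw [Finset.sum_congr rfl (fun k₁ hk₁ => Finset.sum_congr rfl (step1 k₁ hk₁))]
  simp only [← Finset.sum_mul]
  rw [Finset.sum_comm]
  have step2 : ∀ ℓ₁ ∈ range (ℓ+1),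
      ∑ k₁ ∈ range (k+1), Aq k₁ ℓ₁ * Aq (k-k₁) (ℓ-ℓ₁) = Aq k (ℓ+1) := by
    intro ℓ₁ hℓ₁
    have hℓ₁' : ℓ₁ ≤ ℓ := Nat.lt_succ_iff.mp (Finset.mem_range.mp hℓ₁)
    rw [A_conv ℓ₁ (ℓ-ℓ₁) k, show ℓ₁ + (ℓ-ℓ₁) + 1 = ℓ+1 by omega]
  rw [Finset.sum_congr rfl step2, Finset.sum_const, Finset.card_range, nsmul_eq_mul]
  have h := Nat.choose_mul_factorial_mul_factorial (show m ≤ 2*k+ℓ+m+1 by omega)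
  rw [show 2*k+ℓ+m+1-m = 2*k+ℓ+1 by omega] at h
  have hq : (((2*k+ℓ+m+1).choose m : ℚ) * m ! * (2*k+ℓ+1)!) = ((2*k+ℓ+m+1)! : ℚ) := by
    exact_mod_cast h
  unfold Aq
  rw [show 2*k+(ℓ+1) = 2*k+ℓ+1 by ring, show k+(ℓ+1)+1 = k+ℓ+2 by ring]
  rw [← hq]
  have n1 := factq m
  have n2 := factq k
  have n3 := factq (k+ℓ+2)
  have n4 := factq (2*k+ℓ+1)
  field_simp
  push_cast
  ring
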